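/- The map ι: ℤ_p/ℤ → ℰ/(𝒩 ∩ ℰ), sending α to the class of an approximation sequence {p^{-h}α_h}_{h≥0} (where α_h ∈ ℤ, α_h ≡ α mod p^h), is a well-defined group isomorphism, where ℰ = { (a_h) ∈ ℝ^{ℤ_{≥0}} : p^h⟨p·a_{h+1} − a_h⟩ = O(1) } and 𝒩 = { (a_h) : p^h⟨a_h⟩ = O(h) }, with ⟨x⟩ = dist(x, ℤ). -/

import Mathlib

/-- `⟨x⟩` : the distance from the real number `x` to the nearest integer. -/
noncomputable def distZ (x : ℝ) : ℝ := |x - round x|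

/-- `𝒩` : sequences with `p^h ⟨a_h⟩ = O(h)`. -/
def NSet (p : ℕ) : Set (ℕ → ℝ) :=
  {a | ∃ C : ℝ, ∀ h : ℕ, 0 < h → (p : ℝ) ^ h * distZ (a h) ≤ C * h}

/-- `ℰ` : well-ordered sequences, those with `p^h ⟨p·a_{h+1} − a_h⟩ = O(1)`. -/
def ESet (p : ℕ) : Set (ℕ → ℝ) :=
  {a | ∃ C : ℝ, ∀ h : ℕ, (p : ℝ) ^ h * distZ ((p : ℝ) * a (h + 1) - a h) ≤ C}

/-- `a : ℕ → ℤ` is a system of approximations of `α ∈ ℤ_p`: `a h ≡ α (mod p^h)`;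
the associated approximation sequence is `h ↦ a h / p^h ∈ ℝ`. -/
def IsApprox (p : ℕ) [Fact p.Prime] (α : ℤ_[p]) (a : ℕ → ℤ) : Prop :=
  ∀ h : ℕ, (p : ℤ_[p]) ^ h ∣ (α - (a h : ℤ_[p]))

noncomputable def apprSeq (p : ℕ) (a : ℕ → ℤ) : ℕ → ℝ :=
  fun h => (a h : ℝ) / (p : ℝ) ^ h

lemma distZ_nonneg (x : ℝ) : 0 ≤ distZ x := abs_nonneg _

lemma distZ_intCast (n : ℤ) : distZ (n : ℝ) = 0 := by
  simp [distZ, round_intCast]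

lemma distZ_sub_intCast (x : ℝ) (n : ℤ) : distZ (x - n) = distZ x := by
  simp [distZ, round_sub_intCast]

lemma distZ_le_abs (x : ℝ) : distZ x ≤ |x| := by
  rcases le_or_gt (1/2) |x| with h | h
  · exact (abs_sub_round x).trans h
  · have hx : round x = 0 := by
      rw [round_eq_zero_iff]
      constructor
      · linarith [neg_abs_le x]
      · linarith [le_abs_self x]
    simp [distZ, hx]

lemma step_eq (p : ℕ) (hp : 0 < p) (u : ℕ → ℤ) (h : ℕ) :
    (p : ℝ) * ((u (h+1) : ℝ) / (p : ℝ) ^ (h+1)) - (u h : ℝ) / (p : ℝ) ^ h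
      = ((u (h+1) : ℝ) - (u h : ℝ)) / (p : ℝ) ^ h := by
  have hP : (p : ℝ) ≠ 0 := Nat.cast_ne_zero.2 hp.ne'
  rw [pow_succ]
  field_simp

lemma eset_of_dvd_diff (p : ℕ) (hp : 0 < p) (u : ℕ → ℤ)
    (hu : ∀ h, (p : ℤ) ^ h ∣ u (h+1) - u h) :
    (fun h => (u h : ℝ) / (p : ℝ) ^ h) ∈ ESet p := by
  refine ⟨0, fun h => ?_⟩
  obtain ⟨k, hk⟩ := hu h
  have e1 : (p : ℝ) * ((u (h+1) : ℝ) / (p : ℝ) ^ (h+1)) - (u h : ℝ) / (p : ℝ) ^ h = (k : ℝ) := by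
    rw [step_eq p hp u h]
    have hP : ((p : ℝ)) ^ h ≠ 0 := pow_ne_zero _ (Nat.cast_ne_zero.2 hp.ne')
    have : (u (h+1) : ℝ) - (u h : ℝ) = (p : ℝ) ^ h * (k : ℝ) := by
      have := congrArg (fun z : ℤ => (z : ℝ)) hk
      push_cast at this
      linarith
    rw [this]
    field_simp
  rw [e1, distZ_intCast, mul_zero]

lemma mem_NE_of_dvd (p : ℕ) (hp : 0 < p) (u : ℕ → ℤ)
    (hu : ∀ h, (p : ℤ) ^ h ∣ u h) :
    (fun h => (u h : ℝ) / (p : ℝ) ^ h) ∈ NSet p ∩ ESet p := by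
  constructor
  · refine ⟨0, fun h _ => ?_⟩
    obtain ⟨k, hk⟩ := hu h
    have hP : ((p : ℝ)) ^ h ≠ 0 := pow_ne_zero _ (Nat.cast_ne_zero.2 hp.ne')
    have e1 : (u h : ℝ) / (p : ℝ) ^ h = (k : ℝ) := by
      rw [hk]; push_cast; field_simp
    simp only []
    rw [e1, distZ_intCast, mul_zero, zero_mul]
  · exact eset_of_dvd_diff p hp u fun h =>
      (dvd_sub ((pow_dvd_pow _ (Nat.le_succ h)).trans (hu (h+1))) (hu h))

lemma dvd_int_of_padic (p : ℕ) [Fact p.Prime] {h : ℕ} {k : ℤ}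
    (hd : (p : ℤ_[p]) ^ h ∣ (k : ℤ_[p])) : (p : ℤ) ^ h ∣ k :=
  (PadicInt.pow_p_dvd_int_iff h k).1 hd

lemma part1 (p : ℕ) [Fact p.Prime] (α : ℤ_[p]) (a : ℕ → ℤ) (ha : IsApprox p α a) :
    apprSeq p a ∈ ESet p := by
  have hp : 0 < p := (Fact.out : p.Prime).pos
  have : ∀ h, (p : ℤ) ^ h ∣ a (h+1) - a h := by
    intro h
    apply dvd_int_of_padic p
    have h1 : ((a (h+1) - a h : ℤ) : ℤ_[p]) = (α - (a h : ℤ_[p])) - (α - (a (h+1) : ℤ_[p])) := by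
      push_cast; ring
    rw [h1]
    exact dvd_sub (ha h) ((pow_dvd_pow _ (Nat.le_succ h)).trans (ha (h+1)))
  exact eset_of_dvd_diff p hp a this

lemma part2 (p : ℕ) [Fact p.Prime] (α : ℤ_[p]) (a b : ℕ → ℤ)
    (ha : IsApprox p α a) (hb : IsApprox p α b) :
    apprSeq p a - apprSeq p b ∈ NSet p ∩ ESet p := by
  have hp : 0 < p := (Fact.out : p.Prime).pos
  have he : apprSeq p a - apprSeq p b = fun h => ((a h - b h : ℤ) : ℝ) / (p : ℝ) ^ h := by
    funext h
    simp only [Pi.sub_apply, apprSeq]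
    push_cast
    ring
  rw [he]
  apply mem_NE_of_dvd p hp
  intro h
  apply dvd_int_of_padic p
  have h1 : ((a h - b h : ℤ) : ℤ_[p]) = (α - (b h : ℤ_[p])) - (α - (a h : ℤ_[p])) := by
    push_cast; ring
  rw [h1]
  exact dvd_sub (hb h) (ha h)

lemma part3 (p : ℕ) [Fact p.Prime] (z : ℤ) (a : ℕ → ℤ)
    (ha : IsApprox p ((z : ℤ_[p])) a) :
    apprSeq p a ∈ NSet p ∩ ESet p := by
  have hp : 0 < p := (Fact.out : p.Prime).pos
  have hP0 : (0:ℝ) < (p : ℝ) := by exact_mod_cast hp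
  constructor
  · refine ⟨|(z : ℝ)|, fun h hh => ?_⟩
    have hz : (p : ℤ) ^ h ∣ z - a h := dvd_int_of_padic p (by push_cast; exact ha h)
    obtain ⟨k, hk⟩ := hz
    have h2 : ((a h : ℤ) : ℝ) = (z : ℝ) - (p : ℝ) ^ h * (k : ℝ) := by
      have := congrArg (fun t : ℤ => (t : ℝ)) hk
      push_cast at this
      linarith
    have hP : ((p : ℝ)) ^ h ≠ 0 := pow_ne_zero _ (Nat.cast_ne_zero.2 hp.ne')
    have e1 : (a h : ℝ) / (p : ℝ) ^ h = (z : ℝ) / (p : ℝ) ^ h - (k : ℝ) := by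
      rw [h2]; field_simp
    show (p : ℝ) ^ h * distZ ((a h : ℝ) / (p : ℝ) ^ h) ≤ |(z : ℝ)| * h
    rw [e1, distZ_sub_intCast]
    have h3 : distZ ((z : ℝ) / (p : ℝ) ^ h) ≤ |(z : ℝ)| / (p : ℝ) ^ h := by
      refine (distZ_le_abs _).trans ?_
      rw [abs_div, abs_of_pos (pow_pos hP0 h)]
    calc (p : ℝ) ^ h * distZ ((z : ℝ) / (p : ℝ) ^ h)
        ≤ (p : ℝ) ^ h * (|(z : ℝ)| / (p : ℝ) ^ h) := by
          exact mul_le_mul_of_nonneg_left h3 (by positivity)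
      _ = |(z : ℝ)| := by field_simp
      _ ≤ |(z : ℝ)| * h := le_mul_of_one_le_right (abs_nonneg _) (by exact_mod_cast hh)
  · exact part1 p _ a ha

lemma part4 (p : ℕ) [Fact p.Prime] (α β : ℤ_[p]) (a b c : ℕ → ℤ)
    (ha : IsApprox p α a) (hb : IsApprox p β b) (hc : IsApprox p (α + β) c) :
    apprSeq p c - (apprSeq p a + apprSeq p b) ∈ NSet p ∩ ESet p := by
  have hp : 0 < p := (Fact.out : p.Prime).pos
  have he : apprSeq p c - (apprSeq p a + apprSeq p b)
      = fun h => ((c h - a h - b h : ℤ) : ℝ) / (p : ℝ) ^ h := by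
    funext h
    simp only [Pi.sub_apply, Pi.add_apply, apprSeq]
    push_cast
    ring
  rw [he]
  apply mem_NE_of_dvd p hp
  intro h
  apply dvd_int_of_padic p
  have h1 : ((c h - a h - b h : ℤ) : ℤ_[p])
      = -(((α + β) - (c h : ℤ_[p])) - (α - (a h : ℤ_[p])) - (β - (b h : ℤ_[p]))) := by
    push_cast; ring
  rw [h1]
  exact dvd_neg.2 (dvd_sub (dvd_sub (hc h) (ha h)) (hb h))

open Filter Topology in
lemma part_inj (p : ℕ) [Fact p.Prime] (α : ℤ_[p]) (a : ℕ → ℤ)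
    (ha : IsApprox p α a) (hN : apprSeq p a ∈ NSet p) : ∃ z : ℤ, (z : ℤ_[p]) = α := by
  obtain ⟨C, hC⟩ := hN
  have hp : 0 < p := (Fact.out : p.Prime).pos
  have hP1 : 1 < (p : ℝ) := by exact_mod_cast (Fact.out : p.Prime).one_lt
  have hP0 : (0:ℝ) < (p : ℝ) := by linarith
  have hC0 : 0 ≤ C := by
    have := hC 1 one_pos
    have h2 : (0:ℝ) ≤ (p:ℝ)^1 * distZ (apprSeq p a 1) :=
      mul_nonneg (by positivity) (distZ_nonneg _)
    simpa using le_trans h2 this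
  set r : ℕ → ℤ := fun h => a h - p ^ h * round ((a h : ℝ) / (p : ℝ) ^ h) with hr
  -- real size bound
  have habs : ∀ h : ℕ, 0 < h → |(r h : ℝ)| ≤ C * h := by
    intro h hh
    have h1 : (r h : ℝ) = (p : ℝ) ^ h *
        ((a h : ℝ) / (p : ℝ) ^ h - (round ((a h : ℝ) / (p : ℝ) ^ h) : ℝ)) := by
      have hP : ((p : ℝ)) ^ h ≠ 0 := pow_ne_zero _ (Nat.cast_ne_zero.2 hp.ne')
      simp only [hr]
      push_cast
      field_simp
    have h2 := hC h hh
    rw [h1, abs_mul, abs_of_pos (pow_pos hP0 h)]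
    exact h2
  -- p-adic congruence
  have hdvd : ∀ h : ℕ, (p : ℤ_[p]) ^ h ∣ α - (r h : ℤ_[p]) := by
    intro h
    have h1 : α - (r h : ℤ_[p]) = (α - (a h : ℤ_[p]))
        + (p : ℤ_[p]) ^ h * (round ((a h : ℝ) / (p : ℝ) ^ h) : ℤ_[p]) := by
      simp only [hr]
      push_cast
      ring
    rw [h1]
    exact dvd_add (ha h) (Dvd.intro _ rfl)
  have hdiff : ∀ h : ℕ, (p : ℤ) ^ h ∣ r (h+1) - r h := by
    intro h
    apply dvd_int_of_padic p
    have h1 : ((r (h+1) - r h : ℤ) : ℤ_[p])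
        = (α - (r h : ℤ_[p])) - (α - (r (h+1) : ℤ_[p])) := by push_cast; ring
    rw [h1]
    exact dvd_sub (hdvd h) ((pow_dvd_pow _ (Nat.le_succ h)).trans (hdvd (h+1)))
  -- eventually the linear bound beats the geometric modulus
  have hsum : Summable (fun m : ℕ => (m : ℝ) * ((p : ℝ)⁻¹) ^ m) := by
    have := summable_pow_mul_geometric_of_norm_lt_one (R := ℝ) 1 (r := (p : ℝ)⁻¹)
      (by rw [Real.norm_eq_abs, abs_of_pos (by positivity)]; exact inv_lt_one_of_one_lt₀ hP1)
    simpa using this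
  have ht2 : Tendsto (fun m : ℕ => (3 * C) * ((m : ℝ) * ((p : ℝ)⁻¹) ^ m)) atTop (𝓝 0) := by
    simpa using (hsum.tendsto_atTop_zero.const_mul (3 * C))
  have hev : ∀ᶠ m : ℕ in atTop, (3 * C) * ((m : ℝ) * ((p : ℝ)⁻¹) ^ m) < 1 :=
    ht2.eventually_lt_const one_pos
  obtain ⟨H, hH⟩ := eventually_atTop.1 hev
  set K := max H 1 with hK
  have hbig : ∀ h : ℕ, K ≤ h → C * (2 * h + 1) < (p : ℝ) ^ h := by
    intro h hh
    have h1 : 1 ≤ h := le_trans (le_max_right H 1) hh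
    have h2 := hH h (le_trans (le_max_left H 1) hh)
    have hph : (0:ℝ) < (p : ℝ) ^ h := pow_pos hP0 h
    have h3 : ((p : ℝ)⁻¹) ^ h = ((p : ℝ) ^ h)⁻¹ := by rw [inv_pow]
    rw [h3] at h2
    have h4 : 3 * C * (h : ℝ) < (p : ℝ) ^ h := by
      nlinarith [h2, hph, inv_mul_cancel₀ hph.ne', inv_pos.2 hph]
    have h5 : C * (2 * (h : ℝ) + 1) ≤ 3 * C * h := by
      have : (1 : ℝ) ≤ (h : ℝ) := by exact_mod_cast h1
      nlinarith
    linarith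
  have hstep : ∀ h : ℕ, K ≤ h → r (h+1) = r h := by
    intro h hh
    have h1 : 1 ≤ h := le_trans (le_max_right H 1) hh
    have habs1 := habs h h1
    have habs2 := habs (h+1) (Nat.succ_pos h)
    have hlt : |(r (h+1) - r h : ℤ)| < (p : ℤ) ^ h := by
      have hR : |((r (h+1) : ℝ)) - (r h : ℝ)| < (p : ℝ) ^ h := by
        have := hbig h hh
        have htri := abs_sub (r (h+1) : ℝ) (r h : ℝ)
        push_cast
        calc |((r (h+1) : ℝ)) - (r h : ℝ)| ≤ |(r (h+1) : ℝ)| + |(r h : ℝ)| := abs_sub _ _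
          _ ≤ C * (h+1) + C * h := by push_cast at habs2 ⊢; linarith
          _ = C * (2 * h + 1) := by ring
          _ < (p : ℝ) ^ h := this
      exact_mod_cast hR
    have := Int.eq_zero_of_abs_lt_dvd (hdiff h) hlt
    omega
  have hconst : ∀ h : ℕ, K ≤ h → r h = r K := by
    intro h hh
    induction h, hh using Nat.le_induction with
    | base => rfl
    | succ m hm ih => rw [hstep m hm, ih]
  refine ⟨r K, ?_⟩
  have hdvdall : ∀ m : ℕ, (p : ℤ_[p]) ^ m ∣ α - (r K : ℤ_[p]) := by
    intro m
    have hm : m ≤ max m K := le_max_left _ _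
    have hKm : K ≤ max m K := le_max_right _ _
    have := hdvd (max m K)
    rw [hconst (max m K) hKm] at this
    exact (pow_dvd_pow _ hm).trans this
  have hnorm : ∀ m : ℕ, ‖α - (r K : ℤ_[p])‖ ≤ (p : ℝ) ^ (-(m : ℤ)) := by
    intro m
    rw [PadicInt.norm_le_pow_iff_mem_span_pow, Ideal.mem_span_singleton]
    exact hdvdall m
  have htend : Tendsto (fun m : ℕ => (p : ℝ) ^ (-(m : ℤ))) atTop (𝓝 0) := by
    have := tendsto_pow_atTop_nhds_zero_of_lt_one (by positivity : (0:ℝ) ≤ (p:ℝ)⁻¹)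
      (inv_lt_one_of_one_lt₀ hP1)
    convert this using 2 with m
    rw [zpow_neg, zpow_natCast, inv_pow]
  have h0 : ‖α - (r K : ℤ_[p])‖ ≤ 0 := ge_of_tendsto' htend hnorm
  have : α - (r K : ℤ_[p]) = 0 := by
    have := le_antisymm h0 (norm_nonneg _)
    exact norm_eq_zero.1 this
  exact (sub_eq_zero.1 this).symm

open Filter Topology in
lemma part5 (p : ℕ) [Fact p.Prime] (e : ℕ → ℝ) (he : e ∈ ESet p) :
    ∃ (α : ℤ_[p]) (a : ℕ → ℤ), IsApprox p α a ∧
      e - apprSeq p a ∈ NSet p ∩ ESet p := by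
  obtain ⟨C, hC⟩ := he
  have hp : 0 < p := (Fact.out : p.Prime).pos
  have hP1 : 1 < (p : ℝ) := by exact_mod_cast (Fact.out : p.Prime).one_lt
  have hP0 : (0:ℝ) < (p : ℝ) := by linarith
  set n : ℕ → ℤ := fun h => round ((p : ℝ) * e (h+1) - e h) with hn
  set A : ℕ → ℤ := fun k => round (e 0) + ∑ j ∈ Finset.range k, p ^ j * n j with hA
  have hAsucc : ∀ h : ℕ, A (h+1) = A h + p ^ h * n h := by
    intro h
    simp [hA, Finset.sum_range_succ]
    ring
  -- summability in ℤ_p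
  have hsumgen : ∀ m : ℕ → ℤ, Summable (fun j : ℕ => (p : ℤ_[p]) ^ j * (m j : ℤ_[p])) := by
    intro m
    apply Summable.of_norm_bounded (g := fun j => ((p : ℝ)⁻¹) ^ j)
      (summable_geometric_of_lt_one (by positivity) (inv_lt_one_of_one_lt₀ hP1))
    intro j
    calc ‖(p : ℤ_[p]) ^ j * (m j : ℤ_[p])‖
        ≤ ‖(p : ℤ_[p]) ^ j‖ * ‖(m j : ℤ_[p])‖ := norm_mul_le _ _
      _ ≤ ‖(p : ℤ_[p]) ^ j‖ * 1 := by
          exact mul_le_mul_of_nonneg_left (PadicInt.norm_le_one _) (norm_nonneg _)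
      _ = ((p : ℝ)⁻¹) ^ j := by
          rw [mul_one, PadicInt.norm_p_pow, zpow_neg, zpow_natCast, inv_pow]
  have hsummable := hsumgen n
  set α : ℤ_[p] := (round (e 0) : ℤ_[p]) + ∑' j, (p : ℤ_[p]) ^ j * (n j : ℤ_[p]) with hα
  have happrox : IsApprox p α A := by
    intro k
    have h1 : (∑ j ∈ Finset.range k, (p : ℤ_[p]) ^ j * (n j : ℤ_[p]))
        + ∑' j, (p : ℤ_[p]) ^ (j + k) * (n (j + k) : ℤ_[p])
        = ∑' j, (p : ℤ_[p]) ^ j * (n j : ℤ_[p]) := by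
      simpa using hsummable.sum_add_tsum_nat_add k
    have h2 : α - (A k : ℤ_[p]) = ∑' j, (p : ℤ_[p]) ^ (j + k) * (n (j + k) : ℤ_[p]) := by
      rw [hα, ← h1]
      have : ((A k : ℤ) : ℤ_[p]) = (round (e 0) : ℤ_[p])
          + ∑ j ∈ Finset.range k, (p : ℤ_[p]) ^ j * (n j : ℤ_[p]) := by
        rw [hA]
        push_cast
        ring
      rw [this]
      ring
    have h3 : α - (A k : ℤ_[p]) = (p : ℤ_[p]) ^ k
        * ∑' j, (p : ℤ_[p]) ^ j * (n (j + k) : ℤ_[p]) := by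
      rw [h2, ← Summable.tsum_mul_left _ (hsumgen fun j => n (j + k))]
      exact tsum_congr fun j => by rw [pow_add]; ring
    exact ⟨_, h3⟩
  -- the real bound
  have hbound : ∀ h : ℕ, |(p : ℝ) ^ h * e h - (A h : ℝ)| ≤ 1/2 + C * h := by
    intro h
    induction h with
    | zero =>
        simpa [hA] using abs_sub_round (e 0)
    | succ h ih =>
        have key : (p : ℝ) ^ (h+1) * e (h+1) - (A (h+1) : ℝ)
            = (p : ℝ) ^ h * ((p : ℝ) * e (h+1) - e h - (n h : ℝ))
              + ((p : ℝ) ^ h * e h - (A h : ℝ)) := by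
          rw [hAsucc h]
          push_cast
          ring
        have h2 : |(p : ℝ) ^ h * ((p : ℝ) * e (h+1) - e h - (n h : ℝ))| ≤ C := by
          rw [abs_mul, abs_of_pos (pow_pos hP0 h)]
          exact hC h
        calc |(p : ℝ) ^ (h+1) * e (h+1) - (A (h+1) : ℝ)|
            ≤ |(p : ℝ) ^ h * ((p : ℝ) * e (h+1) - e h - (n h : ℝ))|
              + |(p : ℝ) ^ h * e h - (A h : ℝ)| := by rw [key]; exact abs_add_le _ _
          _ ≤ C + (1/2 + C * h) := add_le_add h2 ih
          _ ≤ 1/2 + C * ((h:ℕ) + 1 : ℕ) := by push_cast; linarith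
  have hC0 : 0 ≤ C := le_trans (mul_nonneg (by positivity) (distZ_nonneg _)) (hC 0)
  refine ⟨α, A, happrox, ?_, ?_⟩
  · -- NSet
    refine ⟨C + 1, fun h hh => ?_⟩
    have hP : ((p : ℝ)) ^ h ≠ 0 := pow_ne_zero _ (Nat.cast_ne_zero.2 hp.ne')
    have e1 : (e - apprSeq p A) h = ((p : ℝ) ^ h * e h - (A h : ℝ)) / (p : ℝ) ^ h := by
      simp only [Pi.sub_apply, apprSeq]
      field_simp
    have h2 : distZ ((e - apprSeq p A) h)
        ≤ |(p : ℝ) ^ h * e h - (A h : ℝ)| / (p : ℝ) ^ h := by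
      rw [e1]
      refine (distZ_le_abs _).trans ?_
      rw [abs_div, abs_of_pos (pow_pos hP0 h)]
    have hh1 : (1 : ℝ) ≤ (h : ℝ) := by exact_mod_cast hh
    calc (p : ℝ) ^ h * distZ ((e - apprSeq p A) h)
        ≤ (p : ℝ) ^ h * (|(p : ℝ) ^ h * e h - (A h : ℝ)| / (p : ℝ) ^ h) :=
          mul_le_mul_of_nonneg_left h2 (by positivity)
      _ = |(p : ℝ) ^ h * e h - (A h : ℝ)| := by field_simp
      _ ≤ 1/2 + C * h := hbound h
      _ ≤ (C + 1) * h := by nlinarith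
  · -- ESet
    refine ⟨C, fun h => ?_⟩
    have hP : ((p : ℝ)) ^ h ≠ 0 := pow_ne_zero _ (Nat.cast_ne_zero.2 hp.ne')
    have e1 : (p : ℝ) * (e - apprSeq p A) (h+1) - (e - apprSeq p A) h
        = ((p : ℝ) * e (h+1) - e h) - (n h : ℝ) := by
      simp only [Pi.sub_apply, apprSeq]
      rw [hAsucc h]
      push_cast
      rw [pow_succ]
      field_simp
      ring
    rw [e1, distZ_sub_intCast]
    exact hC h

/-- Christol–Mebkhout, Théorème 4.2-3: the map
`ι : ℤ_p/ℤ → ℰ/(𝒩 ∩ ℰ)`, `α ↦ {p^{-h} α_h}`, is a well-defined group isomorphism.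
Unfolded at the level of sets and congruences this says:
(1) every approximation sequence lies in `ℰ`;
(2) two approximation sequences of the same `α` differ by an element of `𝒩 ∩ ℰ`
    (well-definedness);
(3) `ℤ` maps into `𝒩 ∩ ℰ` and, conversely, if an approximation sequence of `α`
    lies in `𝒩` then `α ∈ ℤ` (injectivity);
(4) `ι` is additive modulo `𝒩 ∩ ℰ` (group homomorphism);
(5) every element of `ℰ` is congruent modulo `𝒩 ∩ ℰ` to an approximation sequence
    (surjectivity). -/
theorem stmt17 (p : ℕ) [Fact p.Prime] :
    (∀ (α : ℤ_[p]) (a : ℕ → ℤ), IsApprox p α a → apprSeq p a ∈ ESet p) ∧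
    (∀ (α : ℤ_[p]) (a b : ℕ → ℤ), IsApprox p α a → IsApprox p α b →
      apprSeq p a - apprSeq p b ∈ NSet p ∩ ESet p) ∧
    (∀ (z : ℤ) (a : ℕ → ℤ), IsApprox p (z : ℤ_[p]) a →
      apprSeq p a ∈ NSet p ∩ ESet p) ∧
    (∀ (α : ℤ_[p]) (a : ℕ → ℤ), IsApprox p α a → apprSeq p a ∈ NSet p →
      ∃ z : ℤ, (z : ℤ_[p]) = α) ∧
    (∀ (α β : ℤ_[p]) (a b c : ℕ → ℤ), IsApprox p α a → IsApprox p β b →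
      IsApprox p (α + β) c →
      apprSeq p c - (apprSeq p a + apprSeq p b) ∈ NSet p ∩ ESet p) ∧
    (∀ e : ℕ → ℝ, e ∈ ESet p → ∃ (α : ℤ_[p]) (a : ℕ → ℤ), IsApprox p α a ∧
      e - apprSeq p a ∈ NSet p ∩ ESet p) := by
  exact ⟨part1 p, part2 p, part3 p, part_inj p, part4 p, part5 p⟩
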